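/- arXiv:2210.10596 — 5 statements merged into one kernel-verified Lean document; each statement's English description precedes it below -/
import Mathlib

section
/- Let d ≥ 2, x₀ ∈ ℝ^d, v ∈ ℝ^d a unit vector, γ ∈ (0, π/2], and r > 0. Then the set of points of ℝ^d whose distance to the complement of the cone 𝒞_{x₀,v,γ} is greater than r equals the cone translated along its axis: {y ∈ ℝ^d : inf{‖y − z‖ : z ∉ 𝒞_{x₀,v,γ}} > r} = 𝒞_{x₀,v,γ} + (r/sin γ)·v, where S + w denotes the translate {s + w : s ∈ S}. -/
open MeasureTheory Real Filter Set Metric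
open scoped RealInnerProductSpace Pointwise

noncomputable section

/-- The open cone with vertex `x₀`, direction `v`, half-angle `γ`. -/
def cone {d : ℕ} (x₀ v : EuclideanSpace ℝ (Fin d)) (γ : ℝ) :
    Set (EuclideanSpace ℝ (Fin d)) :=
  {y | Real.cos γ * ‖y - x₀‖ < ⟪y - x₀, v⟫}

/-- `A_r(𝒞_{x₀,v,γ})`: the cone translated by `(r / sin γ) • v` along its axis. -/
def coneA {d : ℕ} (x₀ v : EuclideanSpace ℝ (Fin d)) (γ r : ℝ) :
    Set (EuclideanSpace ℝ (Fin d)) :=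
  (fun y => y + (r / Real.sin γ) • v) '' cone x₀ v γ

/-- The signed distance-like function to the boundary of the cone. -/
def gfun {d : ℕ} (x₀ v : EuclideanSpace ℝ (Fin d)) (γ : ℝ)
    (y : EuclideanSpace ℝ (Fin d)) : ℝ :=
  Real.sin γ * ⟪y - x₀, v⟫ - Real.cos γ * ‖(y - x₀) - ⟪y - x₀, v⟫ • v‖

lemma pyth {E : Type*} [NormedAddCommGroup E] [InnerProductSpace ℝ E] {v : E} (hv : ‖v‖ = 1)
    (u : E) : ‖u‖ ^ 2 = ⟪u, v⟫ ^ 2 + ‖u - ⟪u, v⟫ • v‖ ^ 2 := by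
  have h := norm_sub_sq_real u (⟪u, v⟫ • v)
  rw [real_inner_smul_right, norm_smul, hv, Real.norm_eq_abs] at h
  nlinarith [sq_abs ⟪u, v⟫]

lemma inner_perp {E : Type*} [NormedAddCommGroup E] [InnerProductSpace ℝ E] {v : E}
    (hv : ‖v‖ = 1) (u : E) : ⟪u - ⟪u, v⟫ • v, v⟫ = 0 := by
  rw [inner_sub_left, real_inner_smul_left, real_inner_self_eq_norm_sq, hv]
  ring

lemma mem_cone_iff {d : ℕ} (x₀ v : EuclideanSpace ℝ (Fin d)) (hv : ‖v‖ = 1)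
    {γ : ℝ} (hγ : γ ∈ Set.Ioc 0 (π / 2)) (y : EuclideanSpace ℝ (Fin d)) :
    y ∈ cone x₀ v γ ↔ 0 < gfun x₀ v γ y := by
  have hs : 0 < Real.sin γ := Real.sin_pos_of_pos_of_lt_pi hγ.1
    (lt_of_le_of_lt hγ.2 (by linarith [Real.pi_pos]))
  have hc : 0 ≤ Real.cos γ := Real.cos_nonneg_of_mem_Icc
    ⟨by linarith [hγ.1, Real.pi_pos], hγ.2⟩
  have hsc : Real.sin γ ^ 2 + Real.cos γ ^ 2 = 1 := Real.sin_sq_add_cos_sq γ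
  set u := y - x₀ with hu
  set t := ⟪u, v⟫ with ht
  set w := u - t • v with hw
  have hpyth : ‖u‖ ^ 2 = t ^ 2 + ‖w‖ ^ 2 := pyth hv u
  have hwn : (0:ℝ) ≤ ‖w‖ := norm_nonneg _
  have hun : (0:ℝ) ≤ ‖u‖ := norm_nonneg _
  have hXY : (Real.sin γ * t - Real.cos γ * ‖w‖) * (Real.sin γ * t + Real.cos γ * ‖w‖)
      = (t - Real.cos γ * ‖u‖) * (t + Real.cos γ * ‖u‖) := by
    linear_combination Real.cos γ ^ 2 * hpyth + t ^ 2 * hsc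
  constructor
  · intro h
    have h' : Real.cos γ * ‖u‖ < t := h
    have ht0 : 0 < t := lt_of_le_of_lt (mul_nonneg hc hun) h'
    have hY : 0 < Real.sin γ * t + Real.cos γ * ‖w‖ := by
      have := mul_nonneg hc hwn
      nlinarith
    have hpos : 0 < (t - Real.cos γ * ‖u‖) * (t + Real.cos γ * ‖u‖) :=
      mul_pos (sub_pos.2 h') (by nlinarith [mul_nonneg hc hun])
    show 0 < Real.sin γ * t - Real.cos γ * ‖w‖
    by_contra h0
    push_neg at h0
    have : (Real.sin γ * t - Real.cos γ * ‖w‖) * (Real.sin γ * t + Real.cos γ * ‖w‖) ≤ 0 :=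
      mul_nonpos_of_nonpos_of_nonneg h0 hY.le
    linarith [hXY ▸ this]
  · intro h
    have h' : 0 < Real.sin γ * t - Real.cos γ * ‖w‖ := h
    have ht0 : 0 < t := by
      by_contra hle
      push_neg at hle
      nlinarith [mul_nonneg hc hwn, mul_nonpos_of_nonneg_of_nonpos hs.le hle]
    have hY : 0 < Real.sin γ * t + Real.cos γ * ‖w‖ := by
      nlinarith [mul_nonneg hc hwn]
    have hpos : 0 < (t - Real.cos γ * ‖u‖) * (t + Real.cos γ * ‖u‖) := by
      rw [← hXY]; exact mul_pos h' hY
    show Real.cos γ * ‖u‖ < t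
    have h2 : (Real.cos γ * ‖u‖) ^ 2 < t ^ 2 := by nlinarith [mul_nonneg hc hun]
    exact lt_of_pow_lt_pow_left₀ 2 ht0.le h2

lemma gfun_sub_le {d : ℕ} (x₀ v : EuclideanSpace ℝ (Fin d)) (hv : ‖v‖ = 1)
    {γ : ℝ} (hγ : γ ∈ Set.Ioc 0 (π / 2)) (y z : EuclideanSpace ℝ (Fin d)) :
    gfun x₀ v γ y - gfun x₀ v γ z ≤ ‖y - z‖ := by
  have hc : 0 ≤ Real.cos γ := Real.cos_nonneg_of_mem_Icc
    ⟨by linarith [hγ.1, Real.pi_pos], hγ.2⟩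
  have hsc : Real.sin γ ^ 2 + Real.cos γ ^ 2 = 1 := Real.sin_sq_add_cos_sq γ
  set u₁ := y - x₀ with hu₁
  set u₂ := z - x₀ with hu₂
  set t₁ := ⟪u₁, v⟫ with ht₁
  set t₂ := ⟪u₂, v⟫ with ht₂
  set w₁ := u₁ - t₁ • v with hw₁
  set w₂ := u₂ - t₂ • v with hw₂
  have hyz : y - z = u₁ - u₂ := by rw [hu₁, hu₂]; abel
  have ha : ⟪u₁ - u₂, v⟫ = t₁ - t₂ := by rw [inner_sub_left]
  have hwdiff : (u₁ - u₂) - (t₁ - t₂) • v = w₁ - w₂ := by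
    rw [hw₁, hw₂, sub_smul]; abel
  have hpy : ‖u₁ - u₂‖ ^ 2 = (t₁ - t₂) ^ 2 + ‖w₁ - w₂‖ ^ 2 := by
    have h := pyth hv (u₁ - u₂)
    rw [ha, hwdiff] at h
    exact h
  have hnw : -‖w₁ - w₂‖ ≤ ‖w₁‖ - ‖w₂‖ := by
    have h := abs_le.1 (abs_norm_sub_norm_le w₁ w₂)
    linarith [h.1]
  have hN : (0:ℝ) ≤ ‖u₁ - u₂‖ := norm_nonneg _
  have key : Real.sin γ * (t₁ - t₂) + Real.cos γ * ‖w₁ - w₂‖ ≤ ‖u₁ - u₂‖ := by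
    nlinarith [sq_nonneg (Real.cos γ * (t₁ - t₂) - Real.sin γ * ‖w₁ - w₂‖),
      sq_nonneg (‖u₁ - u₂‖ + (Real.sin γ * (t₁ - t₂) + Real.cos γ * ‖w₁ - w₂‖)),
      norm_nonneg (w₁ - w₂)]
  have hrw : gfun x₀ v γ y - gfun x₀ v γ z
      = Real.sin γ * (t₁ - t₂) - Real.cos γ * (‖w₁‖ - ‖w₂‖) := by
    simp only [gfun, ← hu₁, ← hu₂, ← ht₁, ← ht₂, ← hw₁, ← hw₂]
    ring
  rw [hrw, hyz]
  nlinarith [mul_le_mul_of_nonneg_left (neg_le_sub_iff_le_add.1 (by linarith [hnw] :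
    -‖w₁ - w₂‖ ≤ ‖w₁‖ - ‖w₂‖)) hc]

lemma exists_unit_orth {d : ℕ} (hd : 2 ≤ d) (v : EuclideanSpace ℝ (Fin d)) (hv : ‖v‖ = 1) :
    ∃ e : EuclideanSpace ℝ (Fin d), ‖e‖ = 1 ∧ ⟪e, v⟫ = 0 := by
  have hv0 : v ≠ 0 := by intro h; rw [h, norm_zero] at hv; norm_num at hv
  have hfr : Module.finrank ℝ (EuclideanSpace ℝ (Fin d)) = d := by
    simp [finrank_euclideanSpace]
  have h1 : Module.finrank ℝ (ℝ ∙ v) = 1 := finrank_span_singleton hv0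
  have h2 := Submodule.finrank_add_finrank_orthogonal (K := (ℝ ∙ v)) (𝕜 := ℝ)
  rw [h1, hfr] at h2
  have hne : ((ℝ ∙ v)ᗮ : Submodule ℝ (EuclideanSpace ℝ (Fin d))) ≠ ⊥ := by
    intro h
    rw [h, finrank_bot] at h2
    omega
  obtain ⟨x, hxmem, hx0⟩ := Submodule.exists_mem_ne_zero_of_ne_bot hne
  refine ⟨‖x‖⁻¹ • x, ?_, ?_⟩
  · rw [norm_smul, norm_inv, norm_norm, inv_mul_cancel₀ (norm_ne_zero_iff.2 hx0)]
  · rw [real_inner_smul_left]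
    have : ⟪x, v⟫ = 0 := Submodule.mem_orthogonal_singleton_iff_inner_left.1 hxmem
    rw [this, mul_zero]

set_option maxHeartbeats 1000000 in
lemma exists_boundary_point {d : ℕ} (hd : 2 ≤ d) (x₀ v : EuclideanSpace ℝ (Fin d))
    (hv : ‖v‖ = 1) {γ : ℝ} (hγ : γ ∈ Set.Ioc 0 (π / 2)) {y : EuclideanSpace ℝ (Fin d)}
    (hy : y ∈ cone x₀ v γ) :
    ∃ z, z ∉ cone x₀ v γ ∧ dist y z = gfun x₀ v γ y := by
  have hc : 0 ≤ Real.cos γ := Real.cos_nonneg_of_mem_Icc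
    ⟨by linarith [hγ.1, Real.pi_pos], hγ.2⟩
  have hsc : Real.sin γ ^ 2 + Real.cos γ ^ 2 = 1 := Real.sin_sq_add_cos_sq γ
  have hg : 0 < gfun x₀ v γ y := (mem_cone_iff x₀ v hv hγ y).1 hy
  set u := y - x₀ with hu
  set t := ⟪u, v⟫ with ht
  set w := u - t • v with hw
  set s := ‖w‖ with hs
  have hwv : ⟪w, v⟫ = 0 := inner_perp hv u
  obtain ⟨e, he1, hev, hwe⟩ :
      ∃ e : EuclideanSpace ℝ (Fin d), ‖e‖ = 1 ∧ ⟪e, v⟫ = 0 ∧ w = s • e := by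
    by_cases hw0 : w = 0
    · obtain ⟨e, he1, hev⟩ := exists_unit_orth hd v hv
      exact ⟨e, he1, hev, by rw [hw0, hs, hw0, norm_zero, zero_smul]⟩
    · refine ⟨s⁻¹ • w, ?_, ?_, ?_⟩
      · rw [norm_smul, norm_inv, hs, norm_norm,
          inv_mul_cancel₀ (norm_ne_zero_iff.2 hw0)]
      · rw [real_inner_smul_left, hwv, mul_zero]
      · rw [smul_inv_smul₀ (by simpa [hs] using norm_ne_zero_iff.2 hw0)]
  set g := gfun x₀ v γ y with hgdef
  have hgval : g = Real.sin γ * t - Real.cos γ * s := by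
    simp only [hgdef, gfun, ← hu, ← ht, ← hw, ← hs]
  set z := y - g • (Real.sin γ • v - Real.cos γ • e) with hz
  have hve : ⟪v, e⟫ = 0 := by rw [real_inner_comm]; exact hev
  have heunit : ‖Real.sin γ • v - Real.cos γ • e‖ = 1 := by
    have hh := norm_sub_sq_real (Real.sin γ • v) (Real.cos γ • e)
    rw [real_inner_smul_left, real_inner_smul_right, hve, norm_smul, norm_smul, hv, he1,
      Real.norm_eq_abs, Real.norm_eq_abs] at hh
    have h1 : ‖Real.sin γ • v - Real.cos γ • e‖ ^ 2 = 1 := by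
      rw [hh]; nlinarith [sq_abs (Real.sin γ), sq_abs (Real.cos γ)]
    nlinarith [norm_nonneg (Real.sin γ • v - Real.cos γ • e)]
  have hu' : z - x₀ = u - (g * Real.sin γ) • v + (g * Real.cos γ) • e := by
    rw [hz, hu, smul_sub, smul_smul, smul_smul]
    abel
  have ht' : ⟪z - x₀, v⟫ = t - g * Real.sin γ := by
    rw [hu', inner_add_left, inner_sub_left, real_inner_smul_left, real_inner_smul_left,
      hev, real_inner_self_eq_norm_sq, hv, ← ht]
    ring
  have hw' : (z - x₀) - ⟪z - x₀, v⟫ • v = (s + g * Real.cos γ) • e := by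
    rw [ht', hu', sub_smul, add_smul]
    rw [show u - (g * Real.sin γ) • v + (g * Real.cos γ) • e -
        (t • v - (g * Real.sin γ) • v) = (u - t • v) + (g * Real.cos γ) • e by abel,
      ← hw, hwe]
  have hnw' : ‖(z - x₀) - ⟪z - x₀, v⟫ • v‖ = s + g * Real.cos γ := by
    rw [hw', norm_smul, he1, mul_one, Real.norm_eq_abs, abs_of_nonneg]
    have : (0:ℝ) ≤ s := norm_nonneg _
    positivity
  have hgz : gfun x₀ v γ z = 0 := by
    simp only [gfun]
    rw [hnw', ht']
    linear_combination (-1 : ℝ) * hgval + (-g) * hsc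
  refine ⟨z, ?_, ?_⟩
  · rw [mem_cone_iff x₀ v hv hγ z, hgz]
    exact lt_irrefl 0
  · rw [dist_eq_norm, hz, show y - (y - g • (Real.sin γ • v - Real.cos γ • e)) =
      g • (Real.sin γ • v - Real.cos γ • e) by abel,
      norm_smul, heunit, mul_one, Real.norm_eq_abs, abs_of_pos hg]

lemma coneA_eq {d : ℕ} (x₀ v : EuclideanSpace ℝ (Fin d)) (hv : ‖v‖ = 1)
    {γ : ℝ} (hγ : γ ∈ Set.Ioc 0 (π / 2)) (r : ℝ) :
    coneA x₀ v γ r = {y | r < gfun x₀ v γ y} := by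
  have hsin : 0 < Real.sin γ := Real.sin_pos_of_pos_of_lt_pi hγ.1
    (lt_of_le_of_lt hγ.2 (by linarith [Real.pi_pos]))
  ext y
  simp only [coneA, Set.mem_image, Set.mem_setOf_eq]
  constructor
  · rintro ⟨x, hx, rfl⟩
    have hx' := (mem_cone_iff x₀ v hv hγ x).1 hx
    have hkey : gfun x₀ v γ (x + (r / Real.sin γ) • v) = gfun x₀ v γ x + r := by
      simp only [gfun]
      have h1 : x + (r / Real.sin γ) • v - x₀ = (x - x₀) + (r / Real.sin γ) • v := by abel
      rw [h1, inner_add_left, real_inner_smul_left, real_inner_self_eq_norm_sq, hv]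
      have h2 : (x - x₀) + (r / Real.sin γ) • v -
          (⟪x - x₀, v⟫ + r / Real.sin γ * (1 : ℝ) ^ 2) • v
          = (x - x₀) - ⟪x - x₀, v⟫ • v := by
        rw [add_smul]
        simp only [one_pow, mul_one]
        abel
      rw [h2]
      field_simp
      ring
    rw [hkey]
    linarith
  · intro h
    refine ⟨y - (r / Real.sin γ) • v, ?_, by abel⟩
    rw [mem_cone_iff x₀ v hv hγ]
    have hkey : gfun x₀ v γ (y - (r / Real.sin γ) • v) = gfun x₀ v γ y - r := by
      simp only [gfun]
      have h1 : y - (r / Real.sin γ) • v - x₀ = (y - x₀) - (r / Real.sin γ) • v := by abel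
      rw [h1, inner_sub_left, real_inner_smul_left, real_inner_self_eq_norm_sq, hv]
      have h2 : (y - x₀) - (r / Real.sin γ) • v -
          (⟪y - x₀, v⟫ - r / Real.sin γ * (1 : ℝ) ^ 2) • v
          = (y - x₀) - ⟪y - x₀, v⟫ • v := by
        rw [sub_smul]
        simp only [one_pow, mul_one]
        abel
      rw [h2]
      field_simp
      ring
    rw [hkey]
    linarith

/-- For a cone with half-angle `γ ∈ (0, π/2]` and `r > 0`, the set of points
whose distance to the complement of the cone is greater than `r` is the cone translated by
`(r / sin γ) • v` along its axis. -/
theorem cone_infDist_compl_eq_translate {d : ℕ} (hd : 2 ≤ d)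
    (x₀ v : EuclideanSpace ℝ (Fin d)) (hv : ‖v‖ = 1)
    (γ : ℝ) (hγ : γ ∈ Set.Ioc 0 (π / 2)) (r : ℝ) (hr : 0 < r) :
    {y : EuclideanSpace ℝ (Fin d) | r < Metric.infDist y (cone x₀ v γ)ᶜ}
      = coneA x₀ v γ r := by
  have hne : ((cone x₀ v γ)ᶜ).Nonempty := by
    refine ⟨x₀ - v, ?_⟩
    intro hmem
    have hm : Real.cos γ * ‖x₀ - v - x₀‖ < ⟪x₀ - v - x₀, v⟫ := hmem
    rw [show x₀ - v - x₀ = -v by abel, norm_neg, hv, inner_neg_left,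
      real_inner_self_eq_norm_sq, hv] at hm
    have hc : 0 ≤ Real.cos γ := Real.cos_nonneg_of_mem_Icc
      ⟨by linarith [hγ.1, Real.pi_pos], hγ.2⟩
    nlinarith
  rw [coneA_eq x₀ v hv hγ r]
  ext y
  simp only [Set.mem_setOf_eq]
  constructor
  · intro h
    have hy : y ∈ cone x₀ v γ := by
      by_contra hy
      rw [Metric.infDist_zero_of_mem (show y ∈ (cone x₀ v γ)ᶜ from hy)] at h
      linarith
    obtain ⟨z, hz, hdz⟩ := exists_boundary_point hd x₀ v hv hγ hy
    have hle := Metric.infDist_le_dist_of_mem (x := y) (Set.mem_compl hz)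
    rw [hdz] at hle
    linarith
  · intro h
    have hle : gfun x₀ v γ y ≤ Metric.infDist y (cone x₀ v γ)ᶜ := by
      by_contra hlt
      push_neg at hlt
      obtain ⟨z, hz, hdz⟩ := (Metric.infDist_lt_iff hne).1 hlt
      have hgz : gfun x₀ v γ z ≤ 0 := by
        by_contra hpos
        push_neg at hpos
        exact hz ((mem_cone_iff x₀ v hv hγ z).2 hpos)
      have hlip := gfun_sub_le x₀ v hv hγ y z
      rw [← dist_eq_norm] at hlip
      linarith
    linarith
end
end

section
/- Let d ≥ 1, x₀ ∈ ℝ^d, v ∈ ℝ^d a unit vector, γ ∈ (0, π/2], t > 0, and n, m ∈ ℝ. Then the Minkowski sum A_n(𝒞_{x₀,v,γ}) + t·A_m(𝒞_{v,γ}) = A_{n+tm}(𝒞_{x₀,v,γ}), where S + T := {s + t' : s ∈ S, t' ∈ T} and t·S := {t·s : s ∈ S}. -/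
open MeasureTheory Real Filter Set Metric
open scoped RealInnerProductSpace Pointwise

noncomputable section

/-- Minkowski sum identity
`A_n(𝒞_{x₀,v,γ}) + t • A_m(𝒞_{v,γ}) = A_{n+tm}(𝒞_{x₀,v,γ})`. -/
theorem coneA_add_smul_coneA {d : ℕ} (hd : 1 ≤ d)
    (x₀ v : EuclideanSpace ℝ (Fin d)) (hv : ‖v‖ = 1)
    (γ : ℝ) (hγ : γ ∈ Set.Ioc 0 (π / 2)) (t : ℝ) (ht : 0 < t) (n m : ℝ) :
    coneA x₀ v γ n + t • coneA (0 : EuclideanSpace ℝ (Fin d)) v γ m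
      = coneA x₀ v γ (n + t * m) := by
  have hpi := Real.pi_pos
  have hs : Real.sin γ ≠ 0 :=
    ne_of_gt (Real.sin_pos_of_pos_of_lt_pi hγ.1 (lt_of_le_of_lt hγ.2 (by linarith)))
  have hcos : 0 ≤ Real.cos γ := Real.cos_nonneg_of_mem_Icc ⟨by linarith [hγ.1.le], hγ.2⟩
  have hmem : ∀ y : EuclideanSpace ℝ (Fin d),
      y ∈ cone (0 : EuclideanSpace ℝ (Fin d)) v γ ↔ Real.cos γ * ‖y‖ < ⟪y, v⟫ := by
    intro y; simp [cone]
  have hmemx : ∀ y : EuclideanSpace ℝ (Fin d),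
      y ∈ cone x₀ v γ ↔ y - x₀ ∈ cone (0 : EuclideanSpace ℝ (Fin d)) v γ := by
    intro y; simp [cone]
  have hadd : ∀ y z : EuclideanSpace ℝ (Fin d),
      y ∈ cone (0 : EuclideanSpace ℝ (Fin d)) v γ →
      z ∈ cone (0 : EuclideanSpace ℝ (Fin d)) v γ →
      y + z ∈ cone (0 : EuclideanSpace ℝ (Fin d)) v γ := by
    intro y z hy hz
    rw [hmem] at hy hz ⊢
    have h1 : Real.cos γ * ‖y + z‖ ≤ Real.cos γ * (‖y‖ + ‖z‖) :=
      mul_le_mul_of_nonneg_left (norm_add_le y z) hcos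
    have h2 : ⟪y + z, v⟫ = ⟪y, v⟫ + ⟪z, v⟫ := inner_add_left y z v
    nlinarith
  have hsmul : ∀ (c : ℝ), 0 < c → ∀ y : EuclideanSpace ℝ (Fin d),
      y ∈ cone (0 : EuclideanSpace ℝ (Fin d)) v γ →
      c • y ∈ cone (0 : EuclideanSpace ℝ (Fin d)) v γ := by
    intro c hc y hy
    rw [hmem] at hy ⊢
    rw [norm_smul, real_inner_smul_left, Real.norm_eq_abs, abs_of_pos hc]
    nlinarith
  have hdiv : (n + t * m) / Real.sin γ = n / Real.sin γ + t * (m / Real.sin γ) := by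
    field_simp
  ext w
  constructor
  · rw [Set.mem_add]
    rintro ⟨p, hp, q, hq, rfl⟩
    obtain ⟨a, ha, rfl⟩ := hp
    obtain ⟨q', hq', rfl⟩ := hq
    obtain ⟨b, hb, rfl⟩ := hq'
    refine ⟨a + t • b, ?_, ?_⟩
    · rw [hmemx]
      have : a + t • b - x₀ = (a - x₀) + t • b := by abel
      rw [this]
      exact hadd _ _ ((hmemx a).mp ha) (hsmul t ht b hb)
    · simp only
      rw [hdiv]
      module
  · rintro ⟨c, hc, rfl⟩
    rw [Set.mem_add]
    have h1t : (0:ℝ) < 1 + t := by linarith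
    have hmem1 : (1 / (1 + t)) • (c - x₀) ∈ cone (0 : EuclideanSpace ℝ (Fin d)) v γ :=
      hsmul _ (by positivity) _ ((hmemx c).mp hc)
    refine ⟨(x₀ + (1 / (1 + t)) • (c - x₀)) + (n / Real.sin γ) • v, ?_,
      t • (((1 / (1 + t)) • (c - x₀)) + (m / Real.sin γ) • v), ?_, ?_⟩
    · exact ⟨x₀ + (1 / (1 + t)) • (c - x₀), by rw [hmemx]; simpa using hmem1, rfl⟩
    · exact Set.smul_mem_smul_set ⟨(1 / (1 + t)) • (c - x₀), hmem1, rfl⟩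
    · have key : (1 / (1 + t)) • (c - x₀) + t • ((1 / (1 + t)) • (c - x₀)) = c - x₀ := by
        rw [smul_smul, ← add_smul]
        rw [show 1 / (1 + t) + t * (1 / (1 + t)) = 1 by field_simp, one_smul]
      simp only
      rw [hdiv]
      have : (x₀ + (1 / (1 + t)) • (c - x₀)) + (n / Real.sin γ) • v +
          t • (((1 / (1 + t)) • (c - x₀)) + (m / Real.sin γ) • v)
          = x₀ + ((1 / (1 + t)) • (c - x₀) + t • ((1 / (1 + t)) • (c - x₀)))
            + ((n / Real.sin γ) • v + (t * (m / Real.sin γ)) • v) := by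
        module
      rw [this, key, add_smul]
      abel
end
end

section
/- Let d ≥ 2, x₀ ∈ ℝ^d, v ∈ ℝ^d a unit vector, γ ∈ (0, π/2], t ≥ 0, and n, m, r ∈ ℝ. Define the outgoing phase-space set W_{n,m;out} := A_n(𝒞_{x₀,v,γ}) × A_m(𝒞_{v,γ}) ⊆ ℝ^d × ℝ^d and the classically allowed region at time t, 𝔠_t(W_{n,m;out}) := {a + t·b : (a,b) ∈ W_{n,m;out}}. Then for every z ∈ 𝔠_t(W_{n,m;out}) and every w ∈ ℝ^d with w ∉ A_r(𝒞_{x₀,v,γ}), one has ‖z − w‖ ≥ n + m·t − r. -/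
open MeasureTheory Real Filter Set Metric
open scoped RealInnerProductSpace Pointwise

noncomputable section

/-- Adding a vector in the closed cone to a vector in the open cone stays in the open cone. -/
lemma cone_add_closed {d : ℕ} (v : EuclideanSpace ℝ (Fin d)) (γ : ℝ) (hcos : 0 ≤ Real.cos γ)
    {c p : EuclideanSpace ℝ (Fin d)} (hc : c ∈ cone 0 v γ)
    (hp : Real.cos γ * ‖p‖ ≤ ⟪p, v⟫) : c + p ∈ cone 0 v γ := by
  simp only [cone, Set.mem_setOf_eq, sub_zero] at hc ⊢
  have h1 : Real.cos γ * ‖c + p‖ ≤ Real.cos γ * ‖c‖ + Real.cos γ * ‖p‖ := by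
    rw [← mul_add]
    exact mul_le_mul_of_nonneg_left (norm_add_le c p) hcos
  rw [inner_add_left]
  linarith

/-- The shifted vector `(s / sin γ) • v - u` lies in the closed cone when `‖u‖ ≤ s`. -/
lemma shift_mem_closed_cone {d : ℕ} (v : EuclideanSpace ℝ (Fin d)) (hv : ‖v‖ = 1)
    (γ : ℝ) (hγ : γ ∈ Set.Ioc 0 (π / 2)) (s : ℝ) (hs : 0 ≤ s)
    (u : EuclideanSpace ℝ (Fin d)) (hu : ‖u‖ ≤ s) :
    Real.cos γ * ‖(s / Real.sin γ) • v - u‖ ≤ ⟪(s / Real.sin γ) • v - u, v⟫ := by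
  have hπ : γ < π := lt_of_le_of_lt hγ.2 (by linarith [Real.pi_pos])
  have hsin : 0 < Real.sin γ := Real.sin_pos_of_pos_of_lt_pi hγ.1 hπ
  have hsin1 : Real.sin γ ≤ 1 := Real.sin_le_one γ
  have hcos : 0 ≤ Real.cos γ := Real.cos_nonneg_of_mem_Icc ⟨by linarith [hγ.1], hγ.2⟩
  set ρ : ℝ := s / Real.sin γ with hρdef
  have hρ : 0 ≤ ρ := div_nonneg hs hsin.le
  have hρs : Real.sin γ * ρ = s := by rw [hρdef]; field_simp [hsin.ne']
  set τ : ℝ := ⟪u, v⟫ with hτdef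
  have hτ : |τ| ≤ ‖u‖ := by
    have := abs_real_inner_le_norm u v
    rwa [hv, mul_one] at this
  have hinner : ⟪(ρ : ℝ) • v - u, v⟫ = ρ - τ := by
    rw [inner_sub_left, real_inner_smul_left, real_inner_self_eq_norm_sq, hv]
    ring
  have hnorm : ‖(ρ : ℝ) • v - u‖ ^ 2 = ρ ^ 2 - 2 * (ρ * τ) + ‖u‖ ^ 2 := by
    rw [norm_sub_sq_real, norm_smul, real_inner_smul_left, hv, real_inner_comm, ← hτdef]
    rw [Real.norm_eq_abs, abs_of_nonneg hρ]
    ring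
  rw [hinner]
  have hUρ : ‖u‖ ≤ Real.sin γ * ρ := by rw [hρs]; exact hu
  have habs : τ ≤ ‖u‖ := le_trans (le_abs_self τ) hτ
  have habs' : -τ ≤ ‖u‖ := le_trans (neg_le_abs τ) hτ
  have h1 : 0 ≤ ρ - τ := by nlinarith
  have hpc : Real.sin γ ^ 2 + Real.cos γ ^ 2 = 1 := Real.sin_sq_add_cos_sq γ
  have hsq : (Real.cos γ * ‖(ρ : ℝ) • v - u‖) ^ 2 ≤ (ρ - τ) ^ 2 := by
    have hexp : (Real.cos γ * ‖(ρ : ℝ) • v - u‖) ^ 2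
        = Real.cos γ ^ 2 * (ρ ^ 2 - 2 * (ρ * τ) + ‖u‖ ^ 2) := by
      rw [mul_pow, hnorm]
    rw [hexp]
    have hA : 0 ≤ ‖u‖ - Real.sin γ * τ := by
      nlinarith [norm_nonneg u]
    have hB : ‖u‖ - Real.sin γ * τ ≤ Real.sin γ * (ρ - τ) := by nlinarith
    have h2 : (‖u‖ - Real.sin γ * τ) ^ 2 ≤ (Real.sin γ * (ρ - τ)) ^ 2 :=
      pow_le_pow_left₀ hA hB 2
    have h3 : Real.cos γ ^ 2 * (‖u‖ ^ 2 - τ ^ 2) ≤ (‖u‖ - Real.sin γ * τ) ^ 2 := by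
      nlinarith [sq_nonneg (Real.sin γ * ‖u‖ - τ)]
    calc Real.cos γ ^ 2 * (ρ ^ 2 - 2 * (ρ * τ) + ‖u‖ ^ 2)
        = Real.cos γ ^ 2 * (ρ - τ) ^ 2 + Real.cos γ ^ 2 * (‖u‖ ^ 2 - τ ^ 2) := by ring
      _ ≤ Real.cos γ ^ 2 * (ρ - τ) ^ 2 + (Real.sin γ * (ρ - τ)) ^ 2 := by linarith
      _ = (ρ - τ) ^ 2 := by linear_combination (ρ - τ) ^ 2 * hpc
  have hnn : 0 ≤ Real.cos γ * ‖(ρ : ℝ) • v - u‖ := mul_nonneg hcos (norm_nonneg _)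
  nlinarith [hsq, hnn, h1]

/-- the classically allowed region at time `t` of the outgoing phase-space set
`W_{n,m;out} = A_n(𝒞_{x₀,v,γ}) × A_m(𝒞_{v,γ})` stays at distance at least `n + m·t − r`
from the complement of `A_r(𝒞_{x₀,v,γ})`. -/
theorem dist_classical_region_outgoing {d : ℕ} (hd : 2 ≤ d)
    (x₀ v : EuclideanSpace ℝ (Fin d)) (hv : ‖v‖ = 1)
    (γ : ℝ) (hγ : γ ∈ Set.Ioc 0 (π / 2)) (t : ℝ) (ht : 0 ≤ t) (n m r : ℝ) :
    ∀ a ∈ coneA x₀ v γ n, ∀ b ∈ coneA (0 : EuclideanSpace ℝ (Fin d)) v γ m,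
      ∀ w : EuclideanSpace ℝ (Fin d), w ∉ coneA x₀ v γ r →
        n + m * t - r ≤ ‖(a + t • b) - w‖ := by
  rintro a ⟨ca, hca, rfl⟩ b ⟨cb, hcb, rfl⟩ w hw
  have hπ : γ < π := lt_of_le_of_lt hγ.2 (by linarith [Real.pi_pos])
  have hsin : 0 < Real.sin γ := Real.sin_pos_of_pos_of_lt_pi hγ.1 hπ
  have hcos : 0 ≤ Real.cos γ := Real.cos_nonneg_of_mem_Icc ⟨by linarith [hγ.1], hγ.2⟩
  by_contra h
  push_neg at h
  set z := (ca + (n / Real.sin γ) • v) + t • (cb + (m / Real.sin γ) • v) with hz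
  set s : ℝ := n + m * t - r with hsdef
  set u := z - w with hudef
  have hu : ‖u‖ ≤ s := le_of_lt h
  have hs : 0 ≤ s := le_trans (norm_nonneg u) hu
  apply hw
  refine ⟨w - (r / Real.sin γ) • v, ?_, by simp⟩
  -- decompose
  have hkey : (w - (r / Real.sin γ) • v) - x₀
      = ((ca - x₀) + t • cb) + ((s / Real.sin γ) • v - u) := by
    have hcoef : (s / Real.sin γ) • v
        = (n / Real.sin γ) • v + t • ((m / Real.sin γ) • v) - (r / Real.sin γ) • v := by
      rw [smul_smul, ← add_smul, ← sub_smul]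
      congr 1
      field_simp [hsdef]
      ring
    rw [hudef, hz, hcoef]
    simp only [smul_add]
    abel
  have hea : (ca - x₀) ∈ cone 0 v γ := by
    simpa [cone, Set.mem_setOf_eq, sub_zero] using hca
  have heb : Real.cos γ * ‖t • cb‖ ≤ ⟪t • cb, v⟫ := by
    have hcb' : Real.cos γ * ‖cb‖ < ⟪cb, v⟫ := by
      simpa [cone, Set.mem_setOf_eq, sub_zero] using hcb
    rw [norm_smul, real_inner_smul_left, Real.norm_eq_abs, abs_of_nonneg ht]
    calc Real.cos γ * (t * ‖cb‖) = t * (Real.cos γ * ‖cb‖) := by ring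
    _ ≤ t * ⟪cb, v⟫ := mul_le_mul_of_nonneg_left hcb'.le ht
  have he : (ca - x₀) + t • cb ∈ cone 0 v γ := cone_add_closed v γ hcos hea heb
  have hp : Real.cos γ * ‖(s / Real.sin γ) • v - u‖ ≤ ⟪(s / Real.sin γ) • v - u, v⟫ :=
    shift_mem_closed_cone v hv γ hγ s hs u hu
  have hfinal : ((ca - x₀) + t • cb) + ((s / Real.sin γ) • v - u) ∈ cone 0 v γ :=
    cone_add_closed v γ hcos he hp
  simp only [cone, Set.mem_setOf_eq, sub_zero] at hfinal ⊢
  rwa [hkey]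
end
end

section
/- Let d ≥ 2 and let {𝒞_i}_{i∈I} be a family of open cones 𝒞_i = 𝒞_{x_i,v_i,γ_i} in ℝ^d with all half-angles γ_i ∈ (0, π/2]. Let t ≥ 0 and n, m, r ∈ ℝ. Define 𝒲_{n,m;out} := ⋃_{i∈I} A_n(𝒞_{x_i,v_i,γ_i}) × A_m(𝒞_{v_i,γ_i}) ⊆ ℝ^d × ℝ^d, 𝒜_r := ⋃_{i∈I} A_r(𝒞_{x_i,v_i,γ_i}), and 𝔠_t(𝒲_{n,m;out}) := {a + t·b : (a,b) ∈ 𝒲_{n,m;out}}. Then for every z ∈ 𝔠_t(𝒲_{n,m;out}) and every w ∈ ℝ^d with w ∉ 𝒜_r, one has ‖z − w‖ ≥ n + m·t − r. -/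
open MeasureTheory Real Filter Set Metric
open scoped RealInnerProductSpace Pointwise

noncomputable section

set_option maxHeartbeats 1000000

lemma cone_add_aux {d : ℕ} {v a b : EuclideanSpace ℝ (Fin d)} {γ t : ℝ}
    (hc : 0 ≤ Real.cos γ) (ht : 0 ≤ t)
    (ha : Real.cos γ * ‖a‖ < ⟪a, v⟫) (hb : Real.cos γ * ‖b‖ < ⟪b, v⟫) :
    Real.cos γ * ‖a + t • b‖ < ⟪a + t • b, v⟫ := by
  have h1 : ‖a + t • b‖ ≤ ‖a‖ + t * ‖b‖ := by
    calc ‖a + t • b‖ ≤ ‖a‖ + ‖t • b‖ := norm_add_le _ _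
      _ = ‖a‖ + t * ‖b‖ := by rw [norm_smul, Real.norm_of_nonneg ht]
  have h2 : ⟪a + t • b, v⟫ = ⟪a, v⟫ + t * ⟪b, v⟫ := by
    rw [inner_add_left, real_inner_smul_left]
  nlinarith [mul_le_mul_of_nonneg_left hb.le ht, mul_le_mul_of_nonneg_left h1 hc]

lemma key_aux {d : ℕ} {v : EuclideanSpace ℝ (Fin d)} {γ : ℝ} (hv : ‖v‖ = 1)
    (hγ : γ ∈ Set.Ioc 0 (π / 2)) {p q : EuclideanSpace ℝ (Fin d)} (α : ℝ)
    (hp : Real.cos γ * ‖p‖ < ⟪p, v⟫) (hq : ⟪q, v⟫ ≤ Real.cos γ * ‖q‖) :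
    α ≤ ‖p + (α / Real.sin γ) • v - q‖ := by
  rcases le_or_gt α 0 with h | hα
  · exact h.trans (norm_nonneg _)
  set c := Real.cos γ with hcdef
  set σ := Real.sin γ with hσdef
  have hσ : 0 < σ := Real.sin_pos_of_pos_of_lt_pi hγ.1
    (lt_of_le_of_lt hγ.2 (by linarith [Real.pi_pos]))
  have hσ1 : σ ≤ 1 := Real.sin_le_one γ
  have hc0 : 0 ≤ c := Real.cos_nonneg_of_mem_Icc ⟨by linarith [hγ.1, Real.pi_pos], hγ.2⟩
  have hsc : σ ^ 2 + c ^ 2 = 1 := Real.sin_sq_add_cos_sq γ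
  have hc1 : c < 1 := by nlinarith
  have hvv : ⟪v, v⟫ = (1 : ℝ) := by
    rw [real_inner_self_eq_norm_mul_norm, hv, mul_one]
  by_cases hq0 : q = 0
  · subst hq0
    have h1 : ⟪p + (α / σ) • v, v⟫ ≤ ‖p + (α / σ) • v‖ := by
      calc ⟪p + (α / σ) • v, v⟫ ≤ ‖p + (α / σ) • v‖ * ‖v‖ := real_inner_le_norm _ _
        _ = ‖p + (α / σ) • v‖ := by rw [hv, mul_one]
    have h2 : ⟪p + (α / σ) • v, v⟫ = ⟪p, v⟫ + (α / σ) * ⟪v, v⟫ := by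
      rw [inner_add_left, real_inner_smul_left]
    have hpv : 0 ≤ ⟪p, v⟫ := le_of_lt (lt_of_le_of_lt (mul_nonneg hc0 (norm_nonneg p)) hp)
    have hαs : α ≤ α / σ := by
      rw [le_div_iff₀ hσ]; nlinarith
    rw [sub_zero]
    rw [hvv, mul_one] at h2
    linarith [h2 ▸ h1]
  · set Q := ‖q‖ with hQdef
    have hQ : 0 < Q := norm_pos_iff.2 hq0
    set s := ⟪v, q⟫ with hsdef
    have hqv : ⟪q, v⟫ = s := (real_inner_comm q v).symm
    have hsQ : |s| ≤ Q := by
      calc |s| ≤ ‖v‖ * ‖q‖ := abs_real_inner_le_norm v q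
        _ = Q := by rw [hv, one_mul]
    set u := Q • v - c • q with hudef
    set z := p + (α / σ) • v - q with hzdef
    have hqq : ⟪q, q⟫ = Q ^ 2 := by
      rw [real_inner_self_eq_norm_mul_norm]; ring
    -- norm of u squared
    have hu2 : ‖u‖ ^ 2 = Q ^ 2 - 2 * c * Q * s + c ^ 2 * Q ^ 2 := by
      rw [hudef, norm_sub_sq_real, norm_smul, norm_smul, real_inner_smul_left,
        real_inner_smul_right]
      simp [Real.norm_of_nonneg hc0, Real.norm_of_nonneg hQ.le, hv, ← hsdef, ← hQdef]
      ring
    -- inner product of z with u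
    have hzu : ⟪z, u⟫ = Q * ⟪p, v⟫ - c * ⟪p, q⟫ + (α / σ) * (Q - c * s)
        - (Q * s - c * Q ^ 2) := by
      rw [hzdef, hudef]
      simp only [inner_sub_left, inner_sub_right, inner_add_left, real_inner_smul_left,
        real_inner_smul_right, hvv, hqv, hqq, ← hsdef]
      ring
    have hpq : ⟪p, q⟫ ≤ ‖p‖ * Q := real_inner_le_norm p q
    have h1 : Q * ⟪p, v⟫ - c * ⟪p, q⟫ ≥ 0 := by
      nlinarith [mul_nonneg hc0 (norm_nonneg p)]
    have h2 : Q * s - c * Q ^ 2 ≤ 0 := by nlinarith [hq]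
    have hcs : c * s < Q := by
      rcases abs_le.1 hsQ with ⟨hl, hr⟩
      nlinarith
    have hzu' : (α / σ) * (Q - c * s) ≤ ⟪z, u⟫ := by
      rw [hzu]; nlinarith
    have hzunorm : ⟪z, u⟫ ≤ ‖z‖ * ‖u‖ := real_inner_le_norm z u
    have hkey : σ * ‖u‖ ≤ Q - c * s := by
      have hsq : σ ^ 2 * ‖u‖ ^ 2 ≤ (Q - c * s) ^ 2 := by
        rw [hu2]; nlinarith [sq_nonneg (s - c * Q)]
      nlinarith [norm_nonneg u, mul_nonneg hσ.le (norm_nonneg u)]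
    have hu0 : 0 < ‖u‖ := by
      rcases (norm_nonneg u).lt_or_eq with h | h
      · exact h
      · exfalso
        have hz0 : ⟪z, u⟫ = 0 := by
          rw [show u = 0 from norm_eq_zero.1 h.symm, inner_zero_right]
        nlinarith [div_pos hα hσ]
    have hfin : α * ‖u‖ ≤ ‖z‖ * ‖u‖ := by
      have h3 : (α / σ) * (σ * ‖u‖) ≤ (α / σ) * (Q - c * s) :=
        mul_le_mul_of_nonneg_left hkey (le_of_lt (div_pos hα hσ))
      have h4 : (α / σ) * (σ * ‖u‖) = α * ‖u‖ := by
        field_simp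
      linarith
    exact le_of_mul_le_mul_right hfin hu0

/-- family version of the distance estimate: the classically allowed region at
time `t` of `𝒲_{n,m;out} = ⋃ᵢ A_n(𝒞ᵢ) × A_m(𝒞_{vᵢ,γᵢ})` stays at distance at least
`n + m·t − r` from the complement of `𝒜_r = ⋃ᵢ A_r(𝒞ᵢ)`. -/
theorem dist_classical_region_outgoing_family {d : ℕ} (hd : 2 ≤ d)
    {I : Type*} (x v : I → EuclideanSpace ℝ (Fin d)) (γ : I → ℝ)
    (hv : ∀ i, ‖v i‖ = 1) (hγ : ∀ i, γ i ∈ Set.Ioc 0 (π / 2))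
    (t : ℝ) (ht : 0 ≤ t) (n m r : ℝ) :
    ∀ z ∈ {z : EuclideanSpace ℝ (Fin d) |
        ∃ ab ∈ ⋃ i, (coneA (x i) (v i) (γ i) n) ×ˢ
          (coneA (0 : EuclideanSpace ℝ (Fin d)) (v i) (γ i) m),
          z = ab.1 + t • ab.2},
      ∀ w : EuclideanSpace ℝ (Fin d), w ∉ ⋃ i, coneA (x i) (v i) (γ i) r →
        n + m * t - r ≤ ‖z - w‖ := by
  intro z hz w hw
  obtain ⟨ab, hab, rfl⟩ := hz
  rw [Set.mem_iUnion] at hab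
  obtain ⟨i, ha, hb⟩ := hab
  obtain ⟨a₀, ha₀, ha1⟩ := ha
  obtain ⟨b₀, hb₀, hb1⟩ := hb
  have hwi : w ∉ coneA (x i) (v i) (γ i) r := fun h => hw (Set.mem_iUnion.2 ⟨i, h⟩)
  have hc0 : 0 ≤ Real.cos (γ i) :=
    Real.cos_nonneg_of_mem_Icc ⟨by linarith [(hγ i).1, Real.pi_pos], (hγ i).2⟩
  have ha₀' : Real.cos (γ i) * ‖a₀ - x i‖ < ⟪a₀ - x i, v i⟫ := ha₀
  have hb₀' : Real.cos (γ i) * ‖b₀‖ < ⟪b₀, v i⟫ := by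
    have := hb₀
    simpa [cone] using this
  have hq : ⟪(w - (r / Real.sin (γ i)) • v i) - x i, v i⟫ ≤
      Real.cos (γ i) * ‖(w - (r / Real.sin (γ i)) • v i) - x i‖ := by
    by_contra h
    push_neg at h
    exact hwi ⟨w - (r / Real.sin (γ i)) • v i, h, by module⟩
  have hp := cone_add_aux (t := t) hc0 ht ha₀' hb₀'
  have hkey := key_aux (hv i) (hγ i) (n + m * t - r) hp hq
  have hvec : (a₀ - x i + t • b₀) + ((n + m * t - r) / Real.sin (γ i)) • v i -
      ((w - (r / Real.sin (γ i)) • v i) - x i) =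
      (a₀ + (n / Real.sin (γ i)) • v i + t • (b₀ + (m / Real.sin (γ i)) • v i)) - w := by
    module
  rw [hvec] at hkey
  simp only [← ha1, ← hb1]
  exact hkey
end
end

section
/- Work in ℝ². Let v₁, v₂ be unit vectors with v₁ ≠ v₂ and v₁ ≠ −v₂, let v_* := (v₁ + v₂)/‖v₁ + v₂‖, and let γ ∈ (0, π/2) be the half-angle between v₁ and v₂, i.e. cos(2γ) = ⟨v₁, v₂⟩. Let r⃗₁ := {t·v₁ : t ≥ 0} and r⃗₂ := {t·v₂ : t ≥ 0}. Then for every r > 0, both cones 𝒞_{(r/sin γ)v_*, v_*, γ} and 𝒞_{−(r/sin γ)v_*, −v_*, π−γ} are contained in {y ∈ ℝ² : inf{‖y − z‖ : z ∈ r⃗₁ ∪ r⃗₂} ≥ r}, the set of points at distance at least r from the union of the two rays. -/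
open MeasureTheory Real Filter Set Metric
open scoped RealInnerProductSpace Pointwise

noncomputable section

lemma le_infDist_aux {α : Type*} [PseudoMetricSpace α] {s : Set α} {x : α} {r : ℝ}
    (hs : s.Nonempty) (h : ∀ z ∈ s, r ≤ dist x z) : r ≤ Metric.infDist x s := by
  rw [Metric.infDist_eq_iInf]
  haveI : Nonempty s := hs.to_subtype
  exact le_ciInf fun z => h z z.2

/-- Distance bound for points in the inner cone. -/
lemma ray_dist_one {E : Type*} [NormedAddCommGroup E] [InnerProductSpace ℝ E]
    {v vi y : E} {c s r t : ℝ}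
    (hc : 0 < c) (hs : 0 < s) (hpyth : c ^ 2 + s ^ 2 = 1) (hr : 0 ≤ r) (ht : 0 ≤ t)
    (hv : ‖v‖ = 1) (hvi : ‖vi‖ = 1) (hviv : ⟪vi, v⟫ = c)
    (hcone : c * ‖y - (r / s) • v‖ < ⟪y - (r / s) • v, v⟫) :
    r ≤ ‖y - t • vi‖ := by
  set w := y - (r / s) • v with hw
  set n := s⁻¹ • (v - c • vi) with hn
  have hvv : ⟪v, v⟫ = 1 := by
    rw [real_inner_self_eq_norm_sq, hv]; norm_num
  have hvivi : ⟪vi, vi⟫ = 1 := by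
    rw [real_inner_self_eq_norm_sq, hvi]; norm_num
  have hvvi : ⟪v, vi⟫ = c := by rw [real_inner_comm]; exact hviv
  -- ‖n‖ = 1
  have hnsq : ‖v - c • vi‖ ^ 2 = s ^ 2 := by
    rw [norm_sub_sq_real, real_inner_smul_right, norm_smul, hvvi, hv, hvi,
      Real.norm_eq_abs, abs_of_pos hc]
    nlinarith
  have hnnorm : ‖n‖ = 1 := by
    have h1 : ‖v - c • vi‖ = s := by
      rw [← Real.sqrt_sq (norm_nonneg _), hnsq, Real.sqrt_sq hs.le]
    rw [hn, norm_smul, h1, Real.norm_eq_abs, abs_of_pos (inv_pos.mpr hs)]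
    field_simp
  -- inner products with n
  have hvn : ⟪v, n⟫ = s := by
    rw [hn, real_inner_smul_right, inner_sub_right, real_inner_smul_right, hvv, hvvi]
    field_simp
    nlinarith
  have hvin : ⟪vi, n⟫ = 0 := by
    rw [hn, real_inner_smul_right, inner_sub_right, real_inner_smul_right, hviv, hvivi]
    simp
  have hwn : 0 ≤ ⟪w, n⟫ := by
    have h1 : ⟪w, vi⟫ ≤ ‖w‖ := by
      have := real_inner_le_norm w vi
      rwa [hvi, mul_one] at this
    have h2 : c * ‖w‖ < ⟪w, v⟫ := hcone
    rw [hn, real_inner_smul_right, inner_sub_right, real_inner_smul_right]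
    have h3 : 0 ≤ ⟪w, v⟫ - c * ⟪w, vi⟫ := by nlinarith
    positivity
  -- conclude
  have hyz : y - t • vi = w + (r / s) • v - t • vi := by rw [hw]; abel
  have hkey : r ≤ ⟪y - t • vi, n⟫ := by
    rw [hyz, inner_sub_left, inner_add_left, real_inner_smul_left, real_inner_smul_left,
      hvn, hvin]
    have : r / s * s = r := by field_simp
    rw [this, mul_zero, sub_zero]
    linarith
  calc r ≤ ⟪y - t • vi, n⟫ := hkey
    _ ≤ ‖y - t • vi‖ * ‖n‖ := real_inner_le_norm _ _
    _ = ‖y - t • vi‖ := by rw [hnnorm, mul_one]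

/-- Distance bound for points in the outer (complementary) cone. -/
lemma ray_dist_two {E : Type*} [NormedAddCommGroup E] [InnerProductSpace ℝ E]
    {v vi y : E} {c s r t : ℝ}
    (hc : 0 < c) (hs : 0 < s) (hpyth : c ^ 2 + s ^ 2 = 1) (hr : 0 < r) (ht : 0 ≤ t)
    (hv : ‖v‖ = 1) (hvi : ‖vi‖ = 1) (hviv : ⟪vi, v⟫ = c)
    (hcone : ⟪y + (r / s) • v, v⟫ < c * ‖y + (r / s) • v‖) :
    r ≤ ‖y - t • vi‖ := by
  set w := y + (r / s) • v with hw
  set u := w - t • vi with hu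
  have hq : 0 < r / s := div_pos hr hs
  have huv : ⟪u, v⟫ < c * ‖u‖ := by
    by_contra hcon
    push_neg at hcon
    have h1 : ⟪w, v⟫ = ⟪u, v⟫ + t * c := by
      rw [hu, inner_sub_left, real_inner_smul_left, hviv]; ring
    have h2 : ‖w‖ ≤ ‖u‖ + t := by
      have : w = u + t • vi := by rw [hu]; abel
      rw [this]
      calc ‖u + t • vi‖ ≤ ‖u‖ + ‖t • vi‖ := norm_add_le _ _
        _ = ‖u‖ + t := by rw [norm_smul, hvi, Real.norm_eq_abs, abs_of_nonneg ht, mul_one]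
    nlinarith
  have hyz : y - t • vi = u - (r / s) • v := by rw [hu, hw]; abel
  have hsq : r ^ 2 ≤ ‖y - t • vi‖ ^ 2 := by
    rw [hyz, norm_sub_sq_real, real_inner_smul_right, norm_smul, hv,
      Real.norm_eq_abs, abs_of_pos hq, mul_one]
    have hrs : r / s * s = r := by field_simp
    nlinarith [sq_nonneg (‖u‖ - (r / s) * c), norm_nonneg u]
  nlinarith [norm_nonneg (y - t • vi)]

/-- broken subspace geometry in ℝ²: both cones
`𝒞_{(r/sin γ)v_*, v_*, γ}` and `𝒞_{−(r/sin γ)v_*, −v_*, π−γ}` are contained in the set of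
points at distance at least `r` from the union of the two rays `ℝ≥0·v₁ ∪ ℝ≥0·v₂`. -/
theorem broken_subspace_cones_subset {v₁ v₂ : EuclideanSpace ℝ (Fin 2)}
    (h1 : ‖v₁‖ = 1) (h2 : ‖v₂‖ = 1) (hne : v₁ ≠ v₂) (hne' : v₁ ≠ -v₂)
    (γ : ℝ) (hγ : γ ∈ Set.Ioo 0 (π / 2)) (hcos : Real.cos (2 * γ) = ⟪v₁, v₂⟫)
    (r : ℝ) (hr : 0 < r) :
    cone ((r / Real.sin γ) • (‖v₁ + v₂‖⁻¹ • (v₁ + v₂))) (‖v₁ + v₂‖⁻¹ • (v₁ + v₂)) γ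
        ⊆ {y : EuclideanSpace ℝ (Fin 2) | r ≤ Metric.infDist y
            ({z | ∃ t : ℝ, 0 ≤ t ∧ z = t • v₁} ∪ {z | ∃ t : ℝ, 0 ≤ t ∧ z = t • v₂})} ∧
    cone (-((r / Real.sin γ) • (‖v₁ + v₂‖⁻¹ • (v₁ + v₂)))) (-(‖v₁ + v₂‖⁻¹ • (v₁ + v₂))) (π - γ)
        ⊆ {y : EuclideanSpace ℝ (Fin 2) | r ≤ Metric.infDist y
            ({z | ∃ t : ℝ, 0 ≤ t ∧ z = t • v₁} ∪ {z | ∃ t : ℝ, 0 ≤ t ∧ z = t • v₂})} := by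
  obtain ⟨hγ0, hγ2⟩ := hγ
  have hπ : 0 < π := Real.pi_pos
  have hc : 0 < Real.cos γ := Real.cos_pos_of_mem_Ioo ⟨by linarith, hγ2⟩
  have hs : 0 < Real.sin γ := Real.sin_pos_of_pos_of_lt_pi hγ0 (by linarith)
  set c := Real.cos γ
  set s := Real.sin γ
  have hpyth : c ^ 2 + s ^ 2 = 1 := by
    have := Real.sin_sq_add_cos_sq γ; linarith
  have h12 : ⟪v₁, v₂⟫ = 2 * c ^ 2 - 1 := by
    rw [← hcos, Real.cos_two_mul]
  have h11 : ⟪v₁, v₁⟫ = 1 := by rw [real_inner_self_eq_norm_sq, h1]; norm_num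
  have h22 : ⟪v₂, v₂⟫ = 1 := by rw [real_inner_self_eq_norm_sq, h2]; norm_num
  have h21 : ⟪v₂, v₁⟫ = 2 * c ^ 2 - 1 := by rw [real_inner_comm]; exact h12
  have hNsq : ‖v₁ + v₂‖ ^ 2 = (2 * c) ^ 2 := by
    rw [norm_add_sq_real, h1, h2, h12]; ring
  have hN : ‖v₁ + v₂‖ = 2 * c := by
    rw [← Real.sqrt_sq (norm_nonneg _), hNsq, Real.sqrt_sq (by positivity)]
  set vs := ‖v₁ + v₂‖⁻¹ • (v₁ + v₂) with hvs
  have hvsnorm : ‖vs‖ = 1 := by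
    rw [hvs, norm_smul, Real.norm_eq_abs, abs_of_pos (by rw [hN]; positivity)]
    rw [inv_mul_cancel₀ (by rw [hN]; positivity)]
  have hv1vs : ⟪v₁, vs⟫ = c := by
    rw [hvs, real_inner_smul_right, inner_add_right, h11, h12, hN]
    field_simp
    ring
  have hv2vs : ⟪v₂, vs⟫ = c := by
    rw [hvs, real_inner_smul_right, inner_add_right, h21, h22, hN]
    field_simp
    ring
  -- the union of the two rays
  set S : Set (EuclideanSpace ℝ (Fin 2)) :=
    {z | ∃ t : ℝ, 0 ≤ t ∧ z = t • v₁} ∪ {z | ∃ t : ℝ, 0 ≤ t ∧ z = t • v₂} with hS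
  have hSne : S.Nonempty := ⟨0, Or.inl ⟨0, le_refl 0, by simp⟩⟩
  constructor
  · intro y hy
    have hy' : c * ‖y - (r / s) • vs‖ < ⟪y - (r / s) • vs, vs⟫ := hy
    refine le_infDist_aux hSne ?_
    rintro z (⟨t, ht, rfl⟩ | ⟨t, ht, rfl⟩) <;> rw [dist_eq_norm]
    · exact ray_dist_one hc hs hpyth hr.le ht hvsnorm h1 hv1vs hy'
    · exact ray_dist_one hc hs hpyth hr.le ht hvsnorm h2 hv2vs hy'
  · intro y hy
    have hy0 : Real.cos (π - γ) * ‖y - -((r / s) • vs)‖ < ⟪y - -((r / s) • vs), -vs⟫ := hy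
    rw [Real.cos_pi_sub, sub_neg_eq_add, inner_neg_right] at hy0
    have hy' : ⟪y + (r / s) • vs, vs⟫ < c * ‖y + (r / s) • vs‖ := by linarith
    refine le_infDist_aux hSne ?_
    rintro z (⟨t, ht, rfl⟩ | ⟨t, ht, rfl⟩) <;> rw [dist_eq_norm]
    · exact ray_dist_two hc hs hpyth hr ht hvsnorm h1 hv1vs hy'
    · exact ray_dist_two hc hs hpyth hr ht hvsnorm h2 hv2vs hy'
end
end
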